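/- Let f_w be an l-layer GCN (l ≥ 2) with nonzero weight matrices W_1,…,W_l, and let ΔW_1,…,ΔW_l be perturbation matrices of matching sizes with ‖ΔW_i‖₂ ≤ ‖W_i‖₂ / l for all i ∈ [l]. Then for any graph G = (X, A) on n nodes: ‖f_{w+Δw}(G) − f_w(G)‖₂ ≤ (1/√n) · e · ‖X‖_F · ‖P_G‖₂^{l−1} · (∏_{i=1}^l ‖W_i‖₂) · Σ_{i=1}^l (‖ΔW_i‖₂ / ‖W_i‖₂); in particular, if moreover ‖X‖₂ ≤ B, then ‖f_{w+Δw}(G) − f_w(G)‖₂ ≤ e · B · (∏_{i=1}^l ‖W_i‖₂) · Σ_{i=1}^l (‖ΔW_i‖₂ / ‖W_i‖₂). -/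

import Mathlib

open MeasureTheory Matrix Finset

noncomputable section

/-- Spectral norm of a real matrix: the operator norm induced by Euclidean vector norms. -/
def specNorm {m n : Type*} [Fintype m] [Fintype n] [DecidableEq n] (A : Matrix m n ℝ) : ℝ :=
  ‖LinearMap.toContinuousLinearMap (Matrix.toEuclideanLin A)‖

/-- Frobenius norm of a real matrix. -/
def frobNorm {m n : Type*} [Fintype m] [Fintype n] (A : Matrix m n ℝ) : ℝ :=
  Real.sqrt (∑ i, ∑ j, (A i j) ^ 2)

/-- Euclidean norm of a finite real vector. -/
def euclNorm {n : Type*} [Fintype n] (v : n → ℝ) : ℝ :=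
  Real.sqrt (∑ i, (v i) ^ 2)

/-- Entrywise ReLU on a matrix. -/
def relu {m k : Type*} (M : Matrix m k ℝ) : Matrix m k ℝ := M.map (fun x => max x 0)

/-- Node representations of a GCN: `H_0 = X`, `H_{k+1} = σ(P H_k W_{k+1})`
(we index weights from `0`, so `W k` is the paper's `W_{k+1}`). -/
def gcnRep {n : ℕ} (d : ℕ → ℕ) (W : ∀ k : ℕ, Matrix (Fin (d k)) (Fin (d (k + 1))) ℝ)
    (P : Matrix (Fin n) (Fin n) ℝ) (X : Matrix (Fin n) (Fin (d 0)) ℝ) :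
    (k : ℕ) → Matrix (Fin n) (Fin (d k)) ℝ
  | 0 => X
  | (k + 1) => relu (P * gcnRep d W P X k * W k)

/-- Output (readout) of an `l`-layer GCN: `f_w(G) = H_l = (1/n) 1_n H_{l-1} W_l`. -/
def gcnOut {n : ℕ} (d : ℕ → ℕ) (W : ∀ k : ℕ, Matrix (Fin (d k)) (Fin (d (k + 1))) ℝ)
    (P : Matrix (Fin n) (Fin n) ℝ) (X : Matrix (Fin n) (Fin (d 0)) ℝ) :
    (l : ℕ) → Fin (d l) → ℝ
  | 0 => fun _ => 0
  | (l + 1) => fun j => (n : ℝ)⁻¹ * ∑ i, (gcnRep d W P X l * W l) i j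

/-- Normalized graph Laplacian `P_G = D̃^{-1/2} Ã D̃^{-1/2}` with `Ã = A + I` and
`D̃ = diag(∑_j Ã_{ij})`, written entrywise. -/
def gcnLap {n : ℕ} (A : Matrix (Fin n) (Fin n) ℝ) : Matrix (Fin n) (Fin n) ℝ :=
  Matrix.of fun i j =>
    (A + 1) i j / (Real.sqrt (∑ k, (A + 1) i k) * Real.sqrt (∑ k, (A + 1) j k))

/-! ### auxiliary norm lemmas -/

lemma euclNorm_eq_norm {m : Type*} [Fintype m] (v : m → ℝ) :
    euclNorm v = ‖(WithLp.equiv 2 (m → ℝ)).symm v‖ := by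
  rw [EuclideanSpace.norm_eq, euclNorm]
  congr 1
  refine Finset.sum_congr rfl fun i _ => ?_
  rw [Real.norm_eq_abs, sq_abs]; rfl

lemma euclNorm_nonneg {m : Type*} [Fintype m] (v : m → ℝ) : 0 ≤ euclNorm v :=
  Real.sqrt_nonneg _

lemma frobNorm_nonneg {m n : Type*} [Fintype m] [Fintype n] (A : Matrix m n ℝ) : 0 ≤ frobNorm A :=
  Real.sqrt_nonneg _

lemma specNorm_nonneg {m n : Type*} [Fintype m] [Fintype n] [DecidableEq n] (A : Matrix m n ℝ) :
    0 ≤ specNorm A := norm_nonneg _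

lemma euclNorm_mulVec_le {m n : Type*} [Fintype m] [Fintype n] [DecidableEq n]
    (A : Matrix m n ℝ) (v : n → ℝ) : euclNorm (A *ᵥ v) ≤ specNorm A * euclNorm v := by
  rw [euclNorm_eq_norm, euclNorm_eq_norm]
  have := (LinearMap.toContinuousLinearMap (Matrix.toEuclideanLin A)).le_opNorm
    ((WithLp.equiv 2 (n → ℝ)).symm v)
  simpa [Matrix.toEuclideanLin_apply, specNorm] using this

lemma specNorm_le_bound {m n : Type*} [Fintype m] [Fintype n] [DecidableEq n]
    (A : Matrix m n ℝ) {c : ℝ} (hc : 0 ≤ c)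
    (h : ∀ v : n → ℝ, euclNorm (A *ᵥ v) ≤ c * euclNorm v) : specNorm A ≤ c := by
  refine ContinuousLinearMap.opNorm_le_bound _ hc fun x => ?_
  have := h ((WithLp.equiv 2 (n → ℝ)) x)
  rw [euclNorm_eq_norm, euclNorm_eq_norm] at this
  simpa [Matrix.toEuclideanLin_apply] using this

lemma specNorm_transpose {m n : Type*} [Fintype m] [Fintype n] [DecidableEq m] [DecidableEq n]
    (A : Matrix m n ℝ) : specNorm Aᵀ = specNorm A := by
  have h : Aᵀ = Aᴴ := by ext i j; simp [Matrix.conjTranspose_apply]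
  rw [h, specNorm, specNorm, Matrix.toEuclideanLin_conjTranspose_eq_adjoint,
    LinearMap.adjoint_toContinuousLinearMap]
  exact ContinuousLinearMap.adjoint.norm_map _

lemma frobNorm_transpose {m n : Type*} [Fintype m] [Fintype n] (A : Matrix m n ℝ) :
    frobNorm Aᵀ = frobNorm A := by
  rw [frobNorm, frobNorm, Finset.sum_comm]; rfl

lemma sq_frobNorm {m n : Type*} [Fintype m] [Fintype n] (A : Matrix m n ℝ) :
    frobNorm A ^ 2 = ∑ i, ∑ j, (A i j) ^ 2 := by
  rw [frobNorm, Real.sq_sqrt]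
  exact Finset.sum_nonneg fun i _ => Finset.sum_nonneg fun j _ => sq_nonneg _

lemma frobNorm_le_of_sq_le {m n : Type*} [Fintype m] [Fintype n] {A : Matrix m n ℝ} {c : ℝ}
    (hc : 0 ≤ c) (h : frobNorm A ^ 2 ≤ c ^ 2) : frobNorm A ≤ c :=
  le_of_sq_le_sq h hc

lemma sq_euclNorm {n : Type*} [Fintype n] (v : n → ℝ) :
    euclNorm v ^ 2 = ∑ i, (v i) ^ 2 :=
  Real.sq_sqrt (Finset.sum_nonneg fun i _ => sq_nonneg _)

lemma frobNorm_mul_le_left {m n p : Type*} [Fintype m] [Fintype n] [Fintype p] [DecidableEq n]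
    (P : Matrix m n ℝ) (H : Matrix n p ℝ) :
    frobNorm (P * H) ≤ specNorm P * frobNorm H := by
  refine frobNorm_le_of_sq_le (mul_nonneg (specNorm_nonneg _) (frobNorm_nonneg _)) ?_
  have key : ∀ j, ∑ i, ((P * H) i j) ^ 2 ≤ specNorm P ^ 2 * ∑ i, (H i j) ^ 2 := by
    intro j
    have h1 : ∑ i, ((P * H) i j) ^ 2 = euclNorm (P *ᵥ fun i => H i j) ^ 2 := by
      rw [sq_euclNorm]
      refine Finset.sum_congr rfl fun i _ => ?_
      simp [Matrix.mul_apply, Matrix.mulVec, dotProduct]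
    rw [h1, ← sq_euclNorm (fun i => H i j), ← mul_pow]
    exact pow_le_pow_left₀ (euclNorm_nonneg _) (euclNorm_mulVec_le P _) 2
  calc frobNorm (P * H) ^ 2 = ∑ j, ∑ i, ((P * H) i j) ^ 2 := by
        rw [sq_frobNorm, Finset.sum_comm]
    _ ≤ ∑ j, specNorm P ^ 2 * ∑ i, (H i j) ^ 2 := Finset.sum_le_sum fun j _ => key j
    _ = specNorm P ^ 2 * ∑ j, ∑ i, (H i j) ^ 2 := by rw [← Finset.mul_sum]
    _ = (specNorm P * frobNorm H) ^ 2 := by rw [mul_pow, sq_frobNorm, Finset.sum_comm]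

lemma frobNorm_mul_le_right {m n p : Type*} [Fintype m] [Fintype n] [Fintype p]
    [DecidableEq m] [DecidableEq n] [DecidableEq p]
    (M : Matrix m n ℝ) (B : Matrix n p ℝ) :
    frobNorm (M * B) ≤ frobNorm M * specNorm B := by
  rw [← frobNorm_transpose (M * B), Matrix.transpose_mul, ← frobNorm_transpose M,
    ← specNorm_transpose B, mul_comm]
  exact frobNorm_mul_le_left _ _

lemma frobNorm_le_frobNorm {m n : Type*} [Fintype m] [Fintype n] (A B : Matrix m n ℝ)
    (h : ∀ i j, |A i j| ≤ |B i j|) : frobNorm A ≤ frobNorm B := by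
  refine Real.sqrt_le_sqrt (Finset.sum_le_sum fun i _ => Finset.sum_le_sum fun j _ => ?_)
  rw [← sq_abs (A i j), ← sq_abs (B i j)]
  exact pow_le_pow_left₀ (abs_nonneg _) (h i j) 2

lemma frobNorm_relu_sub_relu {m k : Type*} [Fintype m] [Fintype k] (M N : Matrix m k ℝ) :
    frobNorm (relu M - relu N) ≤ frobNorm (M - N) := by
  refine frobNorm_le_frobNorm _ _ fun i j => ?_
  simpa [relu, Matrix.sub_apply, Matrix.map_apply, max_comm] using
    abs_max_sub_max_le_abs (M i j) (N i j) 0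

lemma frobNorm_relu_le {m k : Type*} [Fintype m] [Fintype k] (M : Matrix m k ℝ) :
    frobNorm (relu M) ≤ frobNorm M := by
  refine frobNorm_le_frobNorm _ _ fun i j => ?_
  rw [relu, Matrix.map_apply, abs_of_nonneg (le_max_right _ _)]
  exact max_le (le_abs_self _) (abs_nonneg _)

lemma frobNorm_eq_norm {m n : Type*} [Fintype m] [Fintype n] (A : Matrix m n ℝ) :
    frobNorm A = ‖(WithLp.equiv 2 (m × n → ℝ)).symm (fun p => A p.1 p.2)‖ := by
  rw [← euclNorm_eq_norm, euclNorm, frobNorm, Fintype.sum_prod_type]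

lemma frobNorm_add_le {m n : Type*} [Fintype m] [Fintype n] (A B : Matrix m n ℝ) :
    frobNorm (A + B) ≤ frobNorm A + frobNorm B := by
  rw [frobNorm_eq_norm, frobNorm_eq_norm, frobNorm_eq_norm]
  exact (congrArg Norm.norm (show (WithLp.equiv 2 (m × n → ℝ)).symm (fun p => (A + B) p.1 p.2) =
    (WithLp.equiv 2 (m × n → ℝ)).symm (fun p => A p.1 p.2) +
    (WithLp.equiv 2 (m × n → ℝ)).symm (fun p => B p.1 p.2) by ext p; simp)).trans_le (norm_add_le _ _)

lemma specNorm_add_le {m n : Type*} [Fintype m] [Fintype n] [DecidableEq n] (A B : Matrix m n ℝ) :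
    specNorm (A + B) ≤ specNorm A + specNorm B := by
  rw [specNorm, specNorm, specNorm, map_add, map_add]
  exact norm_add_le _ _

lemma specNorm_pos {m n : Type*} [Fintype m] [Fintype n] [DecidableEq n] {A : Matrix m n ℝ}
    (hA : A ≠ 0) : 0 < specNorm A := by
  rw [specNorm, norm_pos_iff]
  intro h
  have h2 : Matrix.toEuclideanLin A = 0 :=
    LinearMap.toContinuousLinearMap.injective (by simp [h])
  exact hA (by simpa using congrArg Matrix.toEuclideanLin.symm h2)

lemma frobNorm_le_sqrt_card_mul_specNorm {m n : Type*} [Fintype m] [Fintype n]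
    [DecidableEq m] [DecidableEq n] (X : Matrix m n ℝ) :
    frobNorm X ≤ Real.sqrt (Fintype.card m) * specNorm X := by
  have key : ∀ i : m, ∑ j, (X i j) ^ 2 ≤ specNorm X ^ 2 := by
    intro i
    have h1 : (Xᵀ *ᵥ (Pi.single i (1:ℝ) : m → ℝ)) = fun j => X i j := by
      ext j; simp [Matrix.mulVec_single]
    have h2 := euclNorm_mulVec_le Xᵀ ((Pi.single i (1:ℝ) : m → ℝ))
    rw [h1, specNorm_transpose] at h2
    have h3 : euclNorm ((Pi.single i (1:ℝ) : m → ℝ)) = 1 := by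
      rw [euclNorm]
      have : ∑ k, ((Pi.single i (1:ℝ) : m → ℝ) k) ^ 2 = 1 := by
        rw [Finset.sum_eq_single i]
        · simp
        · intro b _ hb; simp [Pi.single_apply, hb]
        · simp
      rw [this, Real.sqrt_one]
    rw [h3, mul_one] at h2
    calc ∑ j, (X i j) ^ 2 = euclNorm (fun j => X i j) ^ 2 :=
          (Real.sq_sqrt (Finset.sum_nonneg fun j _ => sq_nonneg _)).symm
      _ ≤ specNorm X ^ 2 := pow_le_pow_left₀ (Real.sqrt_nonneg _) h2 2
  have : frobNorm X ^ 2 ≤ (Fintype.card m) * specNorm X ^ 2 := by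
    rw [frobNorm, Real.sq_sqrt (by positivity)]
    calc ∑ i, ∑ j, (X i j) ^ 2 ≤ ∑ _i : m, specNorm X ^ 2 := Finset.sum_le_sum fun i _ => key i
      _ = (Fintype.card m) * specNorm X ^ 2 := by rw [Finset.sum_const, nsmul_eq_mul, Finset.card_univ]
  refine le_of_sq_le_sq ?_ (mul_nonneg (Real.sqrt_nonneg _) (norm_nonneg _))
  rwa [mul_pow, Real.sq_sqrt (Nat.cast_nonneg _)]

lemma one_add_inv_pow_le_exp {l : ℕ} (hl : 1 ≤ l) :
    (1 + (l : ℝ)⁻¹) ^ (l - 1) ≤ Real.exp 1 := by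
  have hl0 : (0:ℝ) < l := by exact_mod_cast hl
  have h1 : (1 + (l : ℝ)⁻¹) ≤ Real.exp ((l:ℝ)⁻¹) := by
    have := Real.add_one_le_exp ((l:ℝ)⁻¹); linarith
  have h2 : (1 + (l : ℝ)⁻¹) ^ (l - 1) ≤ Real.exp ((l:ℝ)⁻¹) ^ (l - 1) :=
    pow_le_pow_left₀ (by positivity) h1 _
  refine h2.trans ?_
  rw [← Real.exp_nat_mul]
  refine Real.exp_le_exp.mpr ?_
  rw [mul_inv_le_iff₀ hl0, one_mul]
  exact_mod_cast Nat.sub_le l 1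

lemma euclNorm_readout_le {n : ℕ} {p : Type*} [Fintype p] (hn : 0 < n)
    (M : Matrix (Fin n) p ℝ) :
    euclNorm (fun j => (n : ℝ)⁻¹ * ∑ i, M i j) ≤ (Real.sqrt n)⁻¹ * frobNorm M := by
  have hn0 : (0:ℝ) < n := by exact_mod_cast hn
  refine le_of_sq_le_sq ?_ (mul_nonneg (by positivity) (frobNorm_nonneg _))
  rw [sq_euclNorm, mul_pow, frobNorm,
    Real.sq_sqrt (by positivity)]
  have key : ∀ j, ((n : ℝ)⁻¹ * ∑ i, M i j) ^ 2 ≤ (n:ℝ)⁻¹ * ∑ i, (M i j) ^ 2 := by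
    intro j
    have cs := Finset.sum_mul_sq_le_sq_mul_sq Finset.univ (fun _ : Fin n => (1:ℝ)) (fun i => M i j)
    simp only [one_mul, one_pow] at cs
    rw [Finset.sum_const, Finset.card_univ, Fintype.card_fin, nsmul_eq_mul, mul_one] at cs
    calc ((n : ℝ)⁻¹ * ∑ i, M i j) ^ 2 = (n:ℝ)⁻¹ ^ 2 * (∑ i, M i j) ^ 2 := by ring
      _ ≤ (n:ℝ)⁻¹ ^ 2 * ((n:ℝ) * ∑ i, (M i j) ^ 2) := by
          exact mul_le_mul_of_nonneg_left cs (by positivity)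
      _ = (n:ℝ)⁻¹ * ∑ i, (M i j) ^ 2 := by field_simp
  calc ∑ j, ((n : ℝ)⁻¹ * ∑ i, M i j) ^ 2 ≤ ∑ j, (n:ℝ)⁻¹ * ∑ i, (M i j) ^ 2 :=
        Finset.sum_le_sum fun j _ => key j
    _ = (n:ℝ)⁻¹ * ∑ j, ∑ i, (M i j) ^ 2 := by rw [← Finset.mul_sum]
    _ = ((Real.sqrt n)⁻¹) ^ 2 * ∑ i, ∑ j, (M i j) ^ 2 := by
        rw [Finset.sum_comm, inv_pow, Real.sq_sqrt (le_of_lt hn0)]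

lemma gcnLap_specNorm_le_one {n : ℕ} (A : Matrix (Fin n) (Fin n) ℝ)
    (hsymm : A.IsSymm) (h01 : ∀ i j, A i j = 0 ∨ A i j = 1) :
    specNorm (gcnLap A) ≤ 1 := by
  set d : Fin n → ℝ := fun i => ∑ k, (A + 1) i k with hd
  have hAnn : ∀ i j, 0 ≤ (A + 1) i j := by
    intro i j
    rcases h01 i j with h | h <;>
      simp [Matrix.add_apply, Matrix.one_apply, h] <;> split <;> norm_num
  have hdpos : ∀ i, 0 < d i := by
    intro i
    have h1 : (1:ℝ) ≤ (A + 1) i i := by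
      rcases h01 i i with h | h <;> simp [Matrix.add_apply, Matrix.one_apply, h]
    calc (0:ℝ) < 1 := one_pos
      _ ≤ (A + 1) i i := h1
      _ ≤ d i := Finset.single_le_sum (fun k _ => hAnn i k) (Finset.mem_univ i)
  have hsd : ∀ i, 0 < Real.sqrt (d i) := fun i => Real.sqrt_pos.mpr (hdpos i)
  have hP : ∀ i j, gcnLap A i j = (A + 1) i j / (Real.sqrt (d i) * Real.sqrt (d j)) := by
    intro i j; rfl
  have hPnn : ∀ i j, 0 ≤ gcnLap A i j := by
    intro i j; rw [hP]
    exact div_nonneg (hAnn i j) (by positivity)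
  have hAsymm : ∀ i j, (A + 1) i j = (A + 1) j i := by
    intro i j
    have := congrFun (congrFun hsymm i) j
    simp only [Matrix.transpose_apply] at this
    simp [Matrix.add_apply, Matrix.one_apply, this, eq_comm]
  have hPsymm : ∀ i j, gcnLap A i j = gcnLap A j i := by
    intro i j; rw [hP, hP, hAsymm, mul_comm]
  have hrow : ∀ i, ∑ j, gcnLap A i j * Real.sqrt (d j) = Real.sqrt (d i) := by
    intro i
    have : ∀ j, gcnLap A i j * Real.sqrt (d j) = (A + 1) i j / Real.sqrt (d i) := by
      intro j
      rw [hP, div_mul_eq_mul_div, mul_div_mul_right _ _ (ne_of_gt (hsd j))]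
    rw [Finset.sum_congr rfl fun j _ => this j, ← Finset.sum_div]
    exact Real.div_sqrt
  have hcol : ∀ j, ∑ i, Real.sqrt (d i) * gcnLap A i j = Real.sqrt (d j) := by
    intro j
    rw [Finset.sum_congr rfl fun i _ => by rw [hPsymm i j, mul_comm]]
    exact hrow j
  refine specNorm_le_bound _ zero_le_one fun v => ?_
  rw [one_mul]
  refine le_of_sq_le_sq ?_ (Real.sqrt_nonneg _)
  rw [sq_euclNorm, sq_euclNorm]
  have key : ∀ i, ((gcnLap A *ᵥ v) i) ^ 2 ≤
      Real.sqrt (d i) * ∑ j, gcnLap A i j / Real.sqrt (d j) * v j ^ 2 := by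
    intro i
    have hmv : (gcnLap A *ᵥ v) i = ∑ j, gcnLap A i j * v j := by
      simp [Matrix.mulVec, dotProduct]
    set f : Fin n → ℝ := fun j => Real.sqrt (gcnLap A i j * Real.sqrt (d j)) with hf
    set g : Fin n → ℝ := fun j => Real.sqrt (gcnLap A i j / Real.sqrt (d j)) * v j with hg
    have hfg : ∀ j, f j * g j = gcnLap A i j * v j := by
      intro j
      rw [hf, hg]
      simp only
      rw [← mul_assoc, ← Real.sqrt_mul (mul_nonneg (hPnn i j) (Real.sqrt_nonneg _))]
      have : gcnLap A i j * Real.sqrt (d j) * (gcnLap A i j / Real.sqrt (d j)) =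
          gcnLap A i j ^ 2 := by
        rw [mul_assoc, ← mul_div_assoc, mul_div_cancel_left₀ _ (ne_of_gt (hsd j))]
        ring
      rw [this, Real.sqrt_sq (hPnn i j)]
    have hf2 : ∑ j, f j ^ 2 = Real.sqrt (d i) := by
      rw [← hrow i]
      refine Finset.sum_congr rfl fun j _ => ?_
      rw [hf]
      exact Real.sq_sqrt (mul_nonneg (hPnn i j) (Real.sqrt_nonneg _))
    have hg2 : ∀ j, g j ^ 2 = gcnLap A i j / Real.sqrt (d j) * v j ^ 2 := by
      intro j
      rw [hg]
      simp only [mul_pow]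
      rw [Real.sq_sqrt (div_nonneg (hPnn i j) (Real.sqrt_nonneg _))]
    have cs := Finset.sum_mul_sq_le_sq_mul_sq Finset.univ f g
    rw [Finset.sum_congr rfl fun j _ => hfg j, hf2] at cs
    rw [hmv]
    refine cs.trans_eq ?_
    congr 1
    exact Finset.sum_congr rfl fun j _ => hg2 j
  calc ∑ i, ((gcnLap A *ᵥ v) i) ^ 2
      ≤ ∑ i, Real.sqrt (d i) * ∑ j, gcnLap A i j / Real.sqrt (d j) * v j ^ 2 :=
        Finset.sum_le_sum fun i _ => key i
    _ = ∑ i, ∑ j, Real.sqrt (d i) * (gcnLap A i j / Real.sqrt (d j) * v j ^ 2) :=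
        Finset.sum_congr rfl fun i _ => Finset.mul_sum _ _ _
    _ = ∑ j, ∑ i, Real.sqrt (d i) * (gcnLap A i j / Real.sqrt (d j) * v j ^ 2) :=
        Finset.sum_comm
    _ = ∑ j, (v j ^ 2 / Real.sqrt (d j)) * ∑ i, Real.sqrt (d i) * gcnLap A i j := by
        refine Finset.sum_congr rfl fun j _ => ?_
        rw [Finset.mul_sum]
        exact Finset.sum_congr rfl fun i _ => by ring
    _ = ∑ j, v j ^ 2 := by
        refine Finset.sum_congr rfl fun j _ => ?_
        rw [hcol j, div_mul_cancel₀ _ (ne_of_gt (hsd j))]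

/-! ### main perturbation argument, for an abstract propagation matrix -/

theorem gcn_pert_aux (n l : ℕ) (hn : 0 < n) (hl : 2 ≤ l) (d : ℕ → ℕ)
    (W ΔW : ∀ k : ℕ, Matrix (Fin (d k)) (Fin (d (k + 1))) ℝ)
    (hW : ∀ k, k < l → W k ≠ 0)
    (hΔ : ∀ k, k < l → specNorm (ΔW k) ≤ specNorm (W k) / l)
    (X : Matrix (Fin n) (Fin (d 0)) ℝ) (P : Matrix (Fin n) (Fin n) ℝ) :
    euclNorm (fun j => gcnOut d (fun k => W k + ΔW k) P X l j - gcnOut d W P X l j) ≤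
      (Real.sqrt n)⁻¹ * Real.exp 1 * frobNorm X * specNorm P ^ (l - 1) *
        (∏ i ∈ Finset.range l, specNorm (W i)) *
        (∑ i ∈ Finset.range l, specNorm (ΔW i) / specNorm (W i)) := by
  have hl1 : 1 ≤ l := le_trans (by norm_num) hl
  have hl0 : (0:ℝ) < l := by exact_mod_cast hl1
  set q : ℝ := 1 + (l:ℝ)⁻¹ with hq
  have hq1 : 1 ≤ q := by rw [hq]; nlinarith [inv_pos.mpr hl0]
  have hq0 : 0 ≤ q := le_trans zero_le_one hq1
  set w : ℕ → ℝ := fun k => specNorm (W k) with hw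
  set δ : ℕ → ℝ := fun k => specNorm (ΔW k) with hδ
  set r : ℕ → ℝ := fun k => δ k / w k with hr
  have hwnn : ∀ k, 0 ≤ w k := fun k => specNorm_nonneg _
  have hδnn : ∀ k, 0 ≤ δ k := fun k => specNorm_nonneg _
  have hrnn : ∀ k, 0 ≤ r k := fun k => div_nonneg (hδnn k) (hwnn k)
  have hwpos : ∀ k, k < l → 0 < w k := fun k hk => specNorm_pos (hW k hk)
  set S : ℕ → ℝ := fun k => ∑ i ∈ Finset.range k, q ^ (k - 1 - i) * r i with hS
  have hSnn : ∀ k, 0 ≤ S k := fun k =>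
    Finset.sum_nonneg fun i _ => mul_nonneg (pow_nonneg hq0 _) (hrnn i)
  have hSsucc : ∀ k, S (k + 1) = q * S k + r k := by
    intro k
    rw [hS]
    simp only
    rw [Finset.sum_range_succ, Nat.add_sub_cancel, Nat.sub_self, pow_zero, one_mul]
    congr 1
    rw [Finset.mul_sum]
    refine Finset.sum_congr rfl fun i hi => ?_
    rw [Finset.mem_range] at hi
    rw [← mul_assoc, ← pow_succ']
    congr 2
    omega
  set c : ℕ → ℝ := fun k => frobNorm X * specNorm P ^ k * ∏ i ∈ Finset.range k, w i with hc
  have hcnn : ∀ k, 0 ≤ c k := fun k =>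
    mul_nonneg (mul_nonneg (frobNorm_nonneg _) (pow_nonneg (specNorm_nonneg _) _))
      (Finset.prod_nonneg fun i _ => hwnn i)
  set H := gcnRep d W P X with hH
  set H' := gcnRep d (fun k => W k + ΔW k) P X with hH'
  -- step lemma
  have step : ∀ k, k < l → frobNorm (H k) ≤ c k → frobNorm (H' k - H k) ≤ c k * S k →
      frobNorm (H' k * (W k + ΔW k) - H k * W k) ≤ c k * w k * S (k + 1) := by
    intro k hk h1 h2
    have hdec : H' k * (W k + ΔW k) - H k * W k =
        (H' k - H k) * (W k + ΔW k) + H k * ΔW k := by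
      simp only [Matrix.sub_mul, Matrix.mul_add]
      abel
    have hδle : δ k ≤ w k / l := hΔ k hk
    have hwr : w k * r k = δ k := by
      rw [hr]; exact mul_div_cancel₀ _ (ne_of_gt (hwpos k hk))
    calc frobNorm (H' k * (W k + ΔW k) - H k * W k)
        ≤ frobNorm ((H' k - H k) * (W k + ΔW k)) + frobNorm (H k * ΔW k) := by
          rw [hdec]; exact frobNorm_add_le _ _
      _ ≤ frobNorm (H' k - H k) * specNorm (W k + ΔW k) + frobNorm (H k) * δ k := by
          exact add_le_add (frobNorm_mul_le_right _ _) (frobNorm_mul_le_right _ _)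
      _ ≤ (c k * S k) * (w k + δ k) + c k * δ k := by
          refine add_le_add ?_ (mul_le_mul_of_nonneg_right h1 (hδnn k))
          refine mul_le_mul h2 (specNorm_add_le _ _) (specNorm_nonneg _)
            (mul_nonneg (hcnn k) (hSnn k))
      _ ≤ c k * w k * S (k + 1) := by
          rw [hSsucc k, ← hwr]
          have h3 : S k * δ k ≤ S k * (w k / l) := mul_le_mul_of_nonneg_left hδle (hSnn k)
          have h4 : c k * (S k * δ k) ≤ c k * (S k * (w k / l)) :=
            mul_le_mul_of_nonneg_left h3 (hcnn k)
          have h5 : w k / (l:ℝ) = w k * (l:ℝ)⁻¹ := div_eq_mul_inv _ _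
          rw [h5] at h4
          rw [← hwr] at h4
          rw [hq]
          nlinarith [h4]
  -- the joint induction
  have claim : ∀ k, k < l → frobNorm (H k) ≤ c k ∧ frobNorm (H' k - H k) ≤ c k * S k := by
    intro k
    induction k with
    | zero =>
      intro _
      constructor
      · have : H 0 = X := rfl
        rw [this, hc]
        simp
      · have : H' 0 - H 0 = 0 := by
          show X - X = 0; simp
        rw [this]
        have h0 : frobNorm (0 : Matrix (Fin n) (Fin (d 0)) ℝ) = 0 := by
          simp [frobNorm]
        rw [h0, hS]
        simp
    | succ k ih =>
      intro hk1
      have hk : k < l := Nat.lt_of_succ_lt hk1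
      obtain ⟨ih1, ih2⟩ := ih hk
      have hstep := step k hk ih1 ih2
      constructor
      · have hRep : H (k + 1) = relu (P * H k * W k) := rfl
        calc frobNorm (H (k + 1)) ≤ frobNorm (P * H k * W k) := by
              rw [hRep]; exact frobNorm_relu_le _
          _ ≤ frobNorm (P * H k) * w k :=
              frobNorm_mul_le_right _ _
          _ ≤ specNorm P * frobNorm (H k) * w k :=
              mul_le_mul_of_nonneg_right (frobNorm_mul_le_left _ _) (hwnn k)
          _ ≤ specNorm P * c k * w k := by
              refine mul_le_mul_of_nonneg_right ?_ (hwnn k)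
              exact mul_le_mul_of_nonneg_left ih1 (specNorm_nonneg _)
          _ = c (k + 1) := by
              rw [hc]
              simp only
              rw [Finset.prod_range_succ, pow_succ]
              ring
      · have hRep : H' (k + 1) - H (k + 1) =
            relu (P * H' k * (W k + ΔW k)) - relu (P * H k * W k) := rfl
        calc frobNorm (H' (k + 1) - H (k + 1))
            ≤ frobNorm (P * H' k * (W k + ΔW k) - P * H k * W k) := by
              rw [hRep]; exact frobNorm_relu_sub_relu _ _
          _ = frobNorm (P * (H' k * (W k + ΔW k) - H k * W k)) := by
              rw [Matrix.mul_sub, Matrix.mul_assoc, Matrix.mul_assoc]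
          _ ≤ specNorm P * frobNorm (H' k * (W k + ΔW k) - H k * W k) :=
              frobNorm_mul_le_left _ _
          _ ≤ specNorm P * (c k * w k * S (k + 1)) :=
              mul_le_mul_of_nonneg_left hstep (specNorm_nonneg _)
          _ = c (k + 1) * S (k + 1) := by
              rw [hc]
              simp only
              rw [Finset.prod_range_succ, pow_succ]
              ring
  -- assemble
  obtain ⟨m, rfl⟩ : ∃ m, l = m + 1 := ⟨l - 1, by omega⟩
  have hm : m < m + 1 := Nat.lt_succ_self m
  obtain ⟨h1, h2⟩ := claim m hm
  have hstep := step m hm h1 h2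
  have hout : (fun j => gcnOut d (fun k => W k + ΔW k) P X (m + 1) j -
      gcnOut d W P X (m + 1) j) =
      fun j => (n : ℝ)⁻¹ * ∑ i, (H' m * (W m + ΔW m) - H m * W m) i j := by
    funext j
    show (n : ℝ)⁻¹ * ∑ i, (H' m * (W m + ΔW m)) i j -
        (n : ℝ)⁻¹ * ∑ i, (H m * W m) i j = _
    rw [← mul_sub, ← Finset.sum_sub_distrib]
    rfl
  rw [hout]
  have hread := euclNorm_readout_le hn (H' m * (W m + ΔW m) - H m * W m)
  refine hread.trans ?_
  have hSl : S (m + 1) ≤ Real.exp 1 * ∑ i ∈ Finset.range (m + 1), r i := by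
    have hSle : S (m + 1) ≤ q ^ m * ∑ i ∈ Finset.range (m + 1), r i := by
      rw [hS, Finset.mul_sum]
      refine Finset.sum_le_sum fun i hi => ?_
      refine mul_le_mul_of_nonneg_right ?_ (hrnn i)
      exact pow_le_pow_right₀ hq1 (by omega)
    refine hSle.trans ?_
    refine mul_le_mul_of_nonneg_right ?_
      (Finset.sum_nonneg fun i _ => hrnn i)
    have := one_add_inv_pow_le_exp (l := m + 1) (by omega)
    simpa [hq] using this
  calc (Real.sqrt n)⁻¹ * frobNorm (H' m * (W m + ΔW m) - H m * W m)
      ≤ (Real.sqrt n)⁻¹ * (c m * w m * S (m + 1)) := by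
        refine mul_le_mul_of_nonneg_left hstep ?_
        positivity
    _ ≤ (Real.sqrt n)⁻¹ * (c m * w m * (Real.exp 1 * ∑ i ∈ Finset.range (m + 1), r i)) := by
        refine mul_le_mul_of_nonneg_left ?_ (by positivity)
        exact mul_le_mul_of_nonneg_left hSl (mul_nonneg (hcnn m) (hwnn m))
    _ = (Real.sqrt n)⁻¹ * Real.exp 1 * frobNorm X * specNorm P ^ (m + 1 - 1) *
        (∏ i ∈ Finset.range (m + 1), w i) * (∑ i ∈ Finset.range (m + 1), r i) := by
        rw [hc]
        simp only [Nat.add_sub_cancel]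
        rw [Finset.prod_range_succ]
        ring

/-- Perturbation bound for the output of an `l`-layer GCN: if `‖ΔW_i‖₂ ≤ ‖W_i‖₂/l` for all
`i`, then `‖f_{w+Δw}(G) - f_w(G)‖₂ ≤ (1/√n) e ‖X‖_F ‖P_G‖₂^{l-1} (∏‖W_i‖₂) Σ ‖ΔW_i‖₂/‖W_i‖₂`;
in particular, if `‖X‖₂ ≤ B`, the right-hand side is at most
`e B (∏‖W_i‖₂) Σ ‖ΔW_i‖₂/‖W_i‖₂`. -/
theorem gcnOut_pert_norm_le (n l : ℕ) (hn : 0 < n) (hl : 2 ≤ l) (d : ℕ → ℕ)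
    (W ΔW : ∀ k : ℕ, Matrix (Fin (d k)) (Fin (d (k + 1))) ℝ)
    (hW : ∀ k, k < l → W k ≠ 0)
    (hΔ : ∀ k, k < l → specNorm (ΔW k) ≤ specNorm (W k) / l)
    (X : Matrix (Fin n) (Fin (d 0)) ℝ) (A : Matrix (Fin n) (Fin n) ℝ)
    (hsymm : A.IsSymm) (h01 : ∀ i j, A i j = 0 ∨ A i j = 1) :
    euclNorm (fun j => gcnOut d (fun k => W k + ΔW k) (gcnLap A) X l j -
        gcnOut d W (gcnLap A) X l j) ≤
      (Real.sqrt n)⁻¹ * Real.exp 1 * frobNorm X * specNorm (gcnLap A) ^ (l - 1) *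
        (∏ i ∈ Finset.range l, specNorm (W i)) *
        (∑ i ∈ Finset.range l, specNorm (ΔW i) / specNorm (W i)) ∧
    ∀ B : ℝ, specNorm X ≤ B →
      euclNorm (fun j => gcnOut d (fun k => W k + ΔW k) (gcnLap A) X l j -
          gcnOut d W (gcnLap A) X l j) ≤
        Real.exp 1 * B * (∏ i ∈ Finset.range l, specNorm (W i)) *
          (∑ i ∈ Finset.range l, specNorm (ΔW i) / specNorm (W i)) := by
  have main := gcn_pert_aux n l hn hl d W ΔW hW hΔ X (gcnLap A)
  refine ⟨main, fun B hB => ?_⟩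
  refine main.trans ?_
  have hn0 : (0:ℝ) < n := by exact_mod_cast hn
  have hXB : frobNorm X ≤ Real.sqrt n * B := by
    have h1 := frobNorm_le_sqrt_card_mul_specNorm X
    rw [Fintype.card_fin] at h1
    refine h1.trans ?_
    exact mul_le_mul_of_nonneg_left hB (Real.sqrt_nonneg _)
  have hB0 : 0 ≤ B := le_trans (specNorm_nonneg X) hB
  have hPle : specNorm (gcnLap A) ^ (l - 1) ≤ 1 :=
    pow_le_one₀ (specNorm_nonneg _) (gcnLap_specNorm_le_one A hsymm h01)
  have hprod : 0 ≤ ∏ i ∈ Finset.range l, specNorm (W i) :=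
    Finset.prod_nonneg fun i _ => specNorm_nonneg _
  have hsum : 0 ≤ ∑ i ∈ Finset.range l, specNorm (ΔW i) / specNorm (W i) :=
    Finset.sum_nonneg fun i _ => div_nonneg (specNorm_nonneg _) (specNorm_nonneg _)
  have hsqrt : (Real.sqrt n)⁻¹ * Real.sqrt n = 1 :=
    inv_mul_cancel₀ (ne_of_gt (Real.sqrt_pos.mpr hn0))
  calc (Real.sqrt n)⁻¹ * Real.exp 1 * frobNorm X * specNorm (gcnLap A) ^ (l - 1) *
        (∏ i ∈ Finset.range l, specNorm (W i)) *
        (∑ i ∈ Finset.range l, specNorm (ΔW i) / specNorm (W i))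
      ≤ (Real.sqrt n)⁻¹ * Real.exp 1 * (Real.sqrt n * B) * 1 *
        (∏ i ∈ Finset.range l, specNorm (W i)) *
        (∑ i ∈ Finset.range l, specNorm (ΔW i) / specNorm (W i)) := by
        refine mul_le_mul_of_nonneg_right ?_ hsum
        refine mul_le_mul_of_nonneg_right ?_ hprod
        refine mul_le_mul ?_ hPle (pow_nonneg (specNorm_nonneg _) _) (by positivity)
        refine mul_le_mul_of_nonneg_left hXB (by positivity)
    _ = Real.exp 1 * B * (∏ i ∈ Finset.range l, specNorm (W i)) *
        (∑ i ∈ Finset.range l, specNorm (ΔW i) / specNorm (W i)) := by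
        field_simp
end
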